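/- arXiv:2101.05039 — 4 statements merged into one kernel-verified Lean document; each statement's English description precedes it below -/
import Mathlib

section
/- Let m be a positive integer and γ > 0. Let s : ℝ → ℝᵐ be differentiable on [0,∞) with s(0) = 0, and suppose there exist functions w : ℝ → ℝᵐ and c : ℝ → ℝ such that for every t ≥ 0 one has ‖w(t)‖ ≤ c(t) and s′(t) = w(t) − (γ + c(t))·sgn(s(t)). Then s(t) = 0 for all t ≥ 0; i.e., the surface s = 0, started on at time 0, is maintained for all subsequent time. -/
open scoped RealInnerProductSpace

/-- The componentwise sign vector: `(signVec s) i = 1` if `s i > 0`, `-1` if `s i < 0`,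
and `0` if `s i = 0` (this is exactly `Real.sign`). -/
noncomputable def signVec {m : ℕ} (s : EuclideanSpace ℝ (Fin m)) : EuclideanSpace ℝ (Fin m) :=
  WithLp.toLp 2 (fun i => Real.sign (s i))

lemma mul_sign_self (x : ℝ) : x * Real.sign x = |x| := by
  rcases lt_trichotomy x 0 with h | h | h
  · rw [Real.sign_of_neg h, abs_of_neg h]; ring
  · simp [h]
  · rw [Real.sign_of_pos h, abs_of_pos h]; ring

lemma norm_le_inner_sign {m : ℕ} (x : EuclideanSpace ℝ (Fin m)) :
    ‖x‖ ≤ ⟪x, signVec x⟫ := by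
  have h1 : ⟪x, signVec x⟫ = ∑ i, |x i| := by
    simp only [PiLp.inner_apply, RCLike.inner_apply, starRingEnd_apply, star_trivial, signVec, PiLp.toLp_apply]
    exact Finset.sum_congr rfl fun i _ => (mul_comm _ _).trans (mul_sign_self (x i))
  rw [h1, EuclideanSpace.norm_eq]
  have h2 : ∑ i, ‖x i‖ ^ 2 ≤ (∑ i, |x i|) ^ 2 := by
    simpa [Real.norm_eq_abs] using
      Finset.sum_sq_le_sq_sum_of_nonneg (s := Finset.univ) (f := fun i => |x i|)
        (fun i _ => abs_nonneg _)
  calc Real.sqrt (∑ i, ‖x i‖ ^ 2) ≤ Real.sqrt ((∑ i, |x i|) ^ 2) := Real.sqrt_le_sqrt h2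
    _ = abs (∑ i, |x i|) := Real.sqrt_sq_eq_abs _
    _ = ∑ i, |x i| := abs_of_nonneg (Finset.sum_nonneg fun i _ => abs_nonneg _)

/-- if `s(0) = 0`, `s` is differentiable on `[0,∞)` with
`s′(t) = w(t) − (γ + c(t)) • sgn(s(t))` and `‖w(t)‖ ≤ c(t)` for all `t ≥ 0`, then
`s(t) = 0` for all `t ≥ 0`: the sliding surface, started on at time 0, is maintained. -/
theorem sliding_surface_maintained
    (m : ℕ) (hm : 0 < m) (γ : ℝ) (hγ : 0 < γ)
    (s w : ℝ → EuclideanSpace ℝ (Fin m)) (c : ℝ → ℝ)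
    (hs0 : s 0 = 0)
    (hw : ∀ t ≥ (0 : ℝ), ‖w t‖ ≤ c t)
    (hderiv : ∀ t ≥ (0 : ℝ),
      HasDerivWithinAt s (w t - (γ + c t) • signVec (s t)) (Set.Ici 0) t) :
    ∀ t ≥ (0 : ℝ), s t = 0 := by
  set g : ℝ → ℝ := fun t => ⟪s t, s t⟫ with hg
  have hc0 : ∀ u ≥ (0 : ℝ), 0 ≤ c u := fun u hu => (norm_nonneg _).trans (hw u hu)
  have hgd : ∀ u ≥ (0 : ℝ), HasDerivWithinAt g
      (⟪s u, w u - (γ + c u) • signVec (s u)⟫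
        + ⟪w u - (γ + c u) • signVec (s u), s u⟫) (Set.Ici 0) u :=
    fun u hu => HasDerivWithinAt.inner ℝ (hderiv u hu) (hderiv u hu)
  have key : ∀ u ∈ interior (Set.Ici (0 : ℝ)), deriv g u ≤ 0 := by
    intro u hu
    rw [interior_Ici] at hu
    have hu0 : (0 : ℝ) ≤ u := le_of_lt hu
    have hda : HasDerivAt g (⟪s u, w u - (γ + c u) • signVec (s u)⟫
        + ⟪w u - (γ + c u) • signVec (s u), s u⟫) u :=
      (hgd u hu0).hasDerivAt (Ici_mem_nhds hu)
    rw [hda.deriv]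
    have hsym : ⟪w u - (γ + c u) • signVec (s u), s u⟫
        = ⟪s u, w u - (γ + c u) • signVec (s u)⟫ := real_inner_comm _ _
    rw [hsym]
    have hbound : ⟪s u, w u - (γ + c u) • signVec (s u)⟫ ≤ 0 := by
      rw [inner_sub_right, real_inner_smul_right]
      have h1 : ⟪s u, w u⟫ ≤ ‖s u‖ * c u :=
        (real_inner_le_norm _ _).trans
          (mul_le_mul_of_nonneg_left (hw u hu0) (norm_nonneg _))
      have h2 : (γ + c u) * ‖s u‖ ≤ (γ + c u) * ⟪s u, signVec (s u)⟫ :=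
        mul_le_mul_of_nonneg_left (norm_le_inner_sign _)
          (by linarith [hc0 u hu0])
      have h3 : ‖s u‖ * c u - (γ + c u) * ‖s u‖ ≤ 0 := by
        have := norm_nonneg (s u); nlinarith
      linarith
    linarith
  have hcont : ContinuousOn g (Set.Ici 0) := fun u hu =>
    (hgd u hu).continuousWithinAt
  have hdiff : DifferentiableOn ℝ g (interior (Set.Ici (0 : ℝ))) := by
    intro u hu
    rw [interior_Ici] at hu
    exact (((hgd u hu.le).hasDerivAt (Ici_mem_nhds hu)).differentiableAt).differentiableWithinAt
  have hanti : AntitoneOn g (Set.Ici 0) :=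
    antitoneOn_of_deriv_nonpos (convex_Ici 0) hcont hdiff key
  intro t ht
  have h1 : g t ≤ g 0 := hanti (Set.self_mem_Ici) ht ht
  have h2 : g 0 = 0 := by simp [hg, hs0]
  have h3 : (0 : ℝ) ≤ g t := real_inner_self_nonneg
  have h4 : ⟪s t, s t⟫ = 0 := le_antisymm (h2 ▸ h1) h3
  exact inner_self_eq_zero.mp h4
end

section
/- Let m be a positive integer and γ > 0. Let s : ℝ → ℝᵐ be differentiable on [0,∞), and suppose there exist functions w : ℝ → ℝᵐ and c : ℝ → ℝ such that for every t ≥ 0 one has ‖w(t)‖ ≤ c(t) and s′(t) = w(t) − (γ + c(t))·sgn(s(t)). Then s(t) = 0 for every t ≥ ‖s(0)‖/γ; in particular, s reaches zero in finite time and remains zero afterwards. -/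
open scoped RealInnerProductSpace

lemma mul_sign_eq_abs (a : ℝ) : a * Real.sign a = |a| := by
  rcases lt_trichotomy a 0 with h | h | h
  · rw [Real.sign_of_neg h, abs_of_neg h]; ring
  · simp [h]
  · rw [Real.sign_of_pos h, abs_of_pos h]; ring

lemma norm_le_inner_signVec {m : ℕ} (v : EuclideanSpace ℝ (Fin m)) :
    ‖v‖ ≤ ⟪v, signVec v⟫ := by
  have h1 : ⟪v, signVec v⟫ = ∑ i, |v i| := by
    rw [PiLp.inner_apply]
    refine Finset.sum_congr rfl fun i _ => ?_
    simp [signVec, RCLike.inner_apply, mul_sign_eq_abs]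
    rw [mul_comm]; exact mul_sign_eq_abs _
  have h2 : ‖v‖ ≤ ∑ i, |v i| := by
    rw [EuclideanSpace.norm_eq]
    have h3 : ∑ i, ‖v i‖ ^ 2 ≤ (∑ i, |v i|) ^ 2 := by
      simpa [Real.norm_eq_abs] using
        Finset.sum_sq_le_sq_sum_of_nonneg (f := fun i => |v i|)
          (s := Finset.univ) (fun i _ => abs_nonneg _)
    calc Real.sqrt (∑ i, ‖v i‖ ^ 2) ≤ Real.sqrt ((∑ i, |v i|) ^ 2) :=
          Real.sqrt_le_sqrt h3
      _ = ∑ i, |v i| := Real.sqrt_sq (Finset.sum_nonneg fun i _ => abs_nonneg _)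
  linarith

/-- if `s` is differentiable on `[0,∞)` with
`s′(t) = w(t) − (γ + c(t)) • sgn(s(t))` and `‖w(t)‖ ≤ c(t)` for all `t ≥ 0`, then
`s(t) = 0` for every `t ≥ ‖s(0)‖/γ`: the sliding surface is reached in finite time
and maintained afterwards. -/
theorem sliding_surface_finite_time_reaching
    (m : ℕ) (hm : 0 < m) (γ : ℝ) (hγ : 0 < γ)
    (s w : ℝ → EuclideanSpace ℝ (Fin m)) (c : ℝ → ℝ)
    (hw : ∀ t ≥ (0 : ℝ), ‖w t‖ ≤ c t)
    (hderiv : ∀ t ≥ (0 : ℝ),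
      HasDerivWithinAt s (w t - (γ + c t) • signVec (s t)) (Set.Ici 0) t) :
    ∀ t, ‖s 0‖ / γ ≤ t → s t = 0 := by
  intro t ht
  have hT0 : (0:ℝ) ≤ ‖s 0‖ / γ := div_nonneg (norm_nonneg _) hγ.le
  have ht0 : (0:ℝ) ≤ t := le_trans hT0 ht
  by_contra hst
  set f : ℝ → ℝ := fun τ => ‖s τ‖ with hfdef
  have hscont : ContinuousOn s (Set.Ici 0) := fun x hx =>
    (hderiv x hx).continuousWithinAt
  have hfcont : ContinuousOn f (Set.Ici 0) := hscont.norm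
  -- derivative of f where s ≠ 0
  have hfderiv : ∀ x : ℝ, 0 < x → s x ≠ 0 →
      HasDerivAt f (⟪s x, w x - (γ + c x) • signVec (s x)⟫ / ‖s x‖) x := by
    intro x hx hsx
    have hds : HasDerivAt s (w x - (γ + c x) • signVec (s x)) x :=
      (hderiv x hx.le).hasDerivAt (Ici_mem_nhds hx)
    have hq : HasDerivAt (fun τ => ⟪s τ, s τ⟫)
        (⟪s x, w x - (γ + c x) • signVec (s x)⟫ +
          ⟪w x - (γ + c x) • signVec (s x), s x⟫) x := hds.inner ℝ hds
    have hq0 : ⟪s x, s x⟫ ≠ 0 := by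
      rw [real_inner_self_eq_norm_sq]
      exact pow_ne_zero 2 (norm_ne_zero_iff.2 hsx)
    have hsqrt := (Real.hasDerivAt_sqrt hq0).comp x hq
    have hfe : f = fun τ => Real.sqrt ⟪s τ, s τ⟫ := by
      funext τ
      rw [real_inner_self_eq_norm_sq, Real.sqrt_sq (norm_nonneg _)]
    rw [hfe]
    refine hsqrt.congr_deriv ?_
    have hns : Real.sqrt ⟪s x, s x⟫ = ‖s x‖ := by
      rw [real_inner_self_eq_norm_sq, Real.sqrt_sq (norm_nonneg _)]
    have hinn : ⟪w x - (γ + c x) • signVec (s x), s x⟫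
        = ⟪s x, w x - (γ + c x) • signVec (s x)⟫ := real_inner_comm _ _
    rw [hns, hinn]
    have hn0 : ‖s x‖ ≠ 0 := norm_ne_zero_iff.2 hsx
    field_simp
    ring
  -- derivative bound
  have hbound : ∀ x : ℝ, 0 ≤ x → s x ≠ 0 →
      ⟪s x, w x - (γ + c x) • signVec (s x)⟫ / ‖s x‖ ≤ -γ := by
    intro x hx hsx
    have hc0 : 0 ≤ c x := le_trans (norm_nonneg _) (hw x hx)
    have h1 : ⟪s x, w x⟫ ≤ c x * ‖s x‖ := by
      calc ⟪s x, w x⟫ ≤ ‖s x‖ * ‖w x‖ := real_inner_le_norm _ _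
        _ ≤ ‖s x‖ * c x := by
            exact mul_le_mul_of_nonneg_left (hw x hx) (norm_nonneg _)
        _ = c x * ‖s x‖ := mul_comm _ _
    have h2 : ‖s x‖ ≤ ⟪s x, signVec (s x)⟫ := norm_le_inner_signVec (s x)
    have h3 : ⟪s x, w x - (γ + c x) • signVec (s x)⟫
        = ⟪s x, w x⟫ - (γ + c x) * ⟪s x, signVec (s x)⟫ := by
      rw [inner_sub_right, real_inner_smul_right]
    have h4 : (γ + c x) * ‖s x‖ ≤ (γ + c x) * ⟪s x, signVec (s x)⟫ :=
      mul_le_mul_of_nonneg_left h2 (by linarith)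
    have h5 : ⟪s x, w x - (γ + c x) • signVec (s x)⟫ ≤ -γ * ‖s x‖ := by
      rw [h3]; nlinarith
    have hn : 0 < ‖s x‖ := norm_pos_iff.2 hsx
    rw [div_le_iff₀ hn]
    linarith [h5]
  -- comparison on intervals where s ≠ 0
  have mono : ∀ a b : ℝ, 0 < a → a ≤ b → (∀ τ ∈ Set.Icc a b, s τ ≠ 0) →
      f b + γ * b ≤ f a + γ * a := by
    intro a b ha hab hne
    set g : ℝ → ℝ := fun τ => f τ + γ * τ with hgdef
    have hsub : Set.Icc a b ⊆ Set.Ici (0:ℝ) := fun τ hτ => le_trans ha.le hτ.1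
    have hgd : ∀ x ∈ Set.Ioo a b,
        HasDerivAt g (⟪s x, w x - (γ + c x) • signVec (s x)⟫ / ‖s x‖ + γ) x := by
      intro x hx
      have hx0 : 0 < x := lt_trans ha hx.1
      have hsx : s x ≠ 0 := hne x ⟨hx.1.le, hx.2.le⟩
      exact ((hfderiv x hx0 hsx).add ((hasDerivAt_id x).const_mul γ)).congr_deriv (by ring)
    have hanti : AntitoneOn g (Set.Icc a b) := by
      apply antitoneOn_of_deriv_nonpos (convex_Icc a b)
      · exact ((hfcont.mono hsub).add (continuousOn_const.mul continuousOn_id))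
      · rw [interior_Icc]
        intro x hx
        exact (hgd x hx).differentiableAt.differentiableWithinAt
      · rw [interior_Icc]
        intro x hx
        have hx0 : 0 < x := lt_trans ha hx.1
        have hsx : s x ≠ 0 := hne x ⟨hx.1.le, hx.2.le⟩
        rw [(hgd x hx).deriv]
        have := hbound x hx0.le hsx
        linarith
    exact hanti (Set.left_mem_Icc.2 hab) (Set.right_mem_Icc.2 hab) hab
  -- the set of zeros
  set K : Set ℝ := insert 0 {τ ∈ Set.Icc 0 t | s τ = 0} with hKdef
  have hKclosed : IsClosed K := by
    apply IsClosed.union isClosed_singleton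
    exact (hscont.mono (Set.Icc_subset_Ici_self)).preimage_isClosed_of_isClosed
      isClosed_Icc isClosed_singleton
  have hKne : K.Nonempty := ⟨0, Set.mem_insert 0 _⟩
  have hKbdd : BddAbove K := by
    refine ⟨t, fun x hx => ?_⟩
    rcases hx with h | h
    · rw [h]; exact ht0
    · exact h.1.2
  set u : ℝ := sSup K with hudef
  have huK : u ∈ K := hKclosed.csSup_mem hKne hKbdd
  have hu0 : 0 ≤ u := le_csSup hKbdd (Set.mem_insert 0 _)
  have hut : u ≤ t := csSup_le hKne (by
    rintro x (h | h)
    · exact h ▸ ht0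
    · exact h.1.2)
  have hne' : ∀ τ, u < τ → τ ≤ t → s τ ≠ 0 := by
    intro τ h1 h2 h0
    have : τ ∈ K := Set.mem_insert_iff.2 (Or.inr ⟨⟨le_trans hu0 h1.le, h2⟩, h0⟩)
    exact absurd (le_csSup hKbdd this) (not_le.2 h1)
  have hutlt : u < t := by
    rcases lt_or_eq_of_le hut with h | h
    · exact h
    · exfalso
      rcases huK with h0 | h0
      · -- u = 0 and u = t, so t = 0, hence ‖s 0‖ ≤ 0
        have ht00 : t = 0 := h ▸ h0
        have : ‖s 0‖ / γ ≤ 0 := ht00 ▸ ht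
        have : ‖s 0‖ ≤ 0 := by
          rw [div_le_iff₀ hγ] at this; linarith
        exact hst (by rw [ht00]; exact norm_le_zero_iff.1 this)
      · exact hst (h ▸ h0.2)
  -- limit argument: f t + γ t ≤ f u + γ u
  have hlim : f t + γ * t ≤ f u + γ * u := by
    have htend : Filter.Tendsto (fun a => f a + γ * a) (nhdsWithin u (Set.Ioi u))
        (nhds (f u + γ * u)) := by
      have h1 : ContinuousWithinAt f (Set.Ioi u) u :=
        (hfcont u hu0).mono (fun x hx => le_trans hu0 (le_of_lt hx))
      exact (h1.add ((continuous_const.mul continuous_id).continuousWithinAt)).tendsto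
    refine ge_of_tendsto htend ?_
    filter_upwards [Ioo_mem_nhdsGT_of_mem (Set.left_mem_Ico.2 hutlt)] with a ha
    refine mono a t (lt_of_le_of_lt hu0 ha.1) ha.2.le (fun τ hτ => ?_)
    exact hne' τ (lt_of_lt_of_le ha.1 hτ.1) hτ.2
  have hft : 0 < f t := norm_pos_iff.2 hst
  rcases huK with h0 | h0
  · have hfu : f u = ‖s 0‖ := by rw [h0]
    have hle : ‖s 0‖ ≤ γ * t := by rw [div_le_iff₀ hγ] at ht; linarith
    rw [h0] at hlim
    simp only [mul_zero, add_zero] at hlim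
    -- f t + γ t ≤ f 0 = ‖s 0‖ ≤ γ t
    have : f t ≤ 0 := by
      have : f 0 = ‖s 0‖ := rfl
      linarith [hlim, hle]
    linarith
  · have hfu : f u = 0 := by simp [hfdef, h0.2]
    rw [hfu] at hlim
    nlinarith [hft, hutlt]
end

section
/- Let n, m be positive integers and P a symmetric positive definite real (n+m)×(n+m) matrix; set Sₓ := R₂ᵀPR₁ and S_u := R₂ᵀPR₂. Let Ā and ΔĀ be real n×(n+m) matrices, K̄ a real m×(n+m) matrix, C̄ ∈ ℝⁿ⁺ᵐ, ΔC ∈ ℝⁿ, and set Λ := P(R₁Ā + R₂K̄) + (R₁Ā + R₂K̄)ᵀP. Then for every x̄ ∈ ℝⁿ⁺ᵐ, writing G(x̄) := (R₁Ā + R₂K̄ + (R₁ − R₂S_u⁻¹Sₓ)ΔĀ)x̄ + C̄ + (R₁ − R₂S_u⁻¹Sₓ)ΔC for the sliding-motion vector field, one has: 2 x̄ᵀ P G(x̄) ≤ x̄ᵀ(Λ + P R₁ ΔĀ + (P R₁ ΔĀ)ᵀ + ΔĀᵀ R₁ᵀ P R₁ ΔĀ + 2 P R₂ (R₂ᵀPR₂)⁻¹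 R₂ᵀ P) x̄ + 2 x̄ᵀ P C̄ + ΔCᵀ R₁ᵀ P R₁ ΔC + 2 x̄ᵀ P R₁ ΔC. -/
open Matrix

/-- The block matrix `R₁ = [Iₙ; 0] : ℝ^{(n+m)×n}`. -/
def R1 (n m : ℕ) : Matrix (Fin n ⊕ Fin m) (Fin n) ℝ :=
  Matrix.of fun i j => if i = Sum.inl j then 1 else 0

/-- The block matrix `R₂ = [0; Iₘ] : ℝ^{(n+m)×m}`. -/
def R2 (n m : ℕ) : Matrix (Fin n ⊕ Fin m) (Fin m) ℝ :=
  Matrix.of fun i j => if i = Sum.inr j then 1 else 0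

section Aux

variable {ι κ : Type*} [Fintype ι] [Fintype κ]

lemma dot_shift (N : Matrix ι κ ℝ) (v : κ → ℝ) (u : ι → ℝ) :
    (N *ᵥ v) ⬝ᵥ u = v ⬝ᵥ (Nᵀ *ᵥ u) := by
  rw [dotProduct_comm, dotProduct_mulVec, mulVec_transpose, dotProduct_comm]

lemma dot_transpose (M : Matrix ι ι ℝ) (v : ι → ℝ) :
    v ⬝ᵥ Mᵀ *ᵥ v = v ⬝ᵥ M *ᵥ v := by
  rw [dotProduct_mulVec, ← mulVec_transpose, transpose_transpose, dotProduct_comm]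

lemma dot_symm {M : Matrix ι ι ℝ} (hM : Mᵀ = M) (v w : ι → ℝ) :
    v ⬝ᵥ M *ᵥ w = w ⬝ᵥ M *ᵥ v := by
  rw [dotProduct_mulVec, ← mulVec_transpose, hM, dotProduct_comm]

end Aux

/-- inequality (33) of the paper: with `P` symmetric positive definite,
`Sₓ = R₂ᵀPR₁`, `S_u = R₂ᵀPR₂`, `Λ = P(R₁Ā + R₂K̄) + (R₁Ā + R₂K̄)ᵀP`, and with
`G(x̄) = (R₁Ā + R₂K̄ + (R₁ − R₂S_u⁻¹Sₓ)ΔĀ)x̄ + C̄ + (R₁ − R₂S_u⁻¹Sₓ)ΔC` the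
sliding-motion vector field, the Lyapunov derivative `2 x̄ᵀ P G(x̄)` is bounded by
`x̄ᵀ(Λ + PR₁ΔĀ + (PR₁ΔĀ)ᵀ + ΔĀᵀR₁ᵀPR₁ΔĀ + 2PR₂(R₂ᵀPR₂)⁻¹R₂ᵀP)x̄ + 2x̄ᵀPC̄
  + ΔCᵀR₁ᵀPR₁ΔC + 2x̄ᵀPR₁ΔC`. -/
theorem lyapunov_derivative_bound_33
    (n m : ℕ) (hn : 0 < n) (hm : 0 < m)
    (P : Matrix (Fin n ⊕ Fin m) (Fin n ⊕ Fin m) ℝ) (hP : P.PosDef)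
    (Sx : Matrix (Fin m) (Fin n) ℝ) (hSx : Sx = (R2 n m)ᵀ * P * R1 n m)
    (Su : Matrix (Fin m) (Fin m) ℝ) (hSu : Su = (R2 n m)ᵀ * P * R2 n m)
    (Abar ΔA : Matrix (Fin n) (Fin n ⊕ Fin m) ℝ)
    (Kbar : Matrix (Fin m) (Fin n ⊕ Fin m) ℝ)
    (Cbar : Fin n ⊕ Fin m → ℝ) (ΔC : Fin n → ℝ)
    (Λ : Matrix (Fin n ⊕ Fin m) (Fin n ⊕ Fin m) ℝ)
    (hΛ : Λ = P * (R1 n m * Abar + R2 n m * Kbar)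
      + (R1 n m * Abar + R2 n m * Kbar)ᵀ * P) :
    ∀ xbar : Fin n ⊕ Fin m → ℝ,
      2 * (xbar ⬝ᵥ P.mulVec
          ((R1 n m * Abar + R2 n m * Kbar
              + (R1 n m - R2 n m * Su⁻¹ * Sx) * ΔA).mulVec xbar
            + Cbar + (R1 n m - R2 n m * Su⁻¹ * Sx).mulVec ΔC))
        ≤ xbar ⬝ᵥ (Λ + P * R1 n m * ΔA + (P * R1 n m * ΔA)ᵀ
              + ΔAᵀ * (R1 n m)ᵀ * P * R1 n m * ΔA
              + (2 : ℝ) • (P * R2 n m * ((R2 n m)ᵀ * P * R2 n m)⁻¹ * (R2 n m)ᵀ * P)).mulVec xbar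
          + 2 * (xbar ⬝ᵥ P.mulVec Cbar)
          + ΔC ⬝ᵥ ((R1 n m)ᵀ * P * R1 n m).mulVec ΔC
          + 2 * (xbar ⬝ᵥ (P * R1 n m).mulVec ΔC) := by
  intro x
  subst hSx hΛ
  set V := R1 n m with hV
  set W := R2 n m with hW
  have hPsym : Pᵀ = P := by
    rw [← Matrix.conjTranspose_eq_transpose_of_trivial]; exact hP.isHermitian
  have hWinj : ∀ y : Fin m → ℝ, y ≠ 0 → W *ᵥ y ≠ 0 := by
    intro y hy h0
    apply hy
    funext j
    have := congrFun h0 (Sum.inr j)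
    simpa [hW, R2, Matrix.mulVec, dotProduct] using this
  have hSuPD : Su.PosDef := by
    rw [hSu]
    refine Matrix.PosDef.of_dotProduct_mulVec_pos ?_ ?_
    · rw [Matrix.IsHermitian, conjTranspose_eq_transpose_of_trivial, transpose_mul,
        transpose_mul, transpose_transpose, hPsym, Matrix.mul_assoc]
    · intro y hy
      have h := hP.dotProduct_mulVec_pos (hWinj y hy)
      simpa [star_trivial, mulVec_mulVec, dot_shift, Matrix.mul_assoc] using h
  have hSuInvPD : Su⁻¹.PosDef := hSuPD.inv
  have hSuInvSym : Su⁻¹ᵀ = Su⁻¹ := by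
    rw [← Matrix.conjTranspose_eq_transpose_of_trivial]; exact hSuInvPD.isHermitian
  have hinv : Su⁻¹ * Su = 1 := Matrix.nonsing_inv_mul _ hSuPD.det_pos.ne'.isUnit
  have hcancel : ∀ {κ : Type} [Fintype κ] (X : Matrix (Fin m) κ ℝ),
      Su⁻¹ * (Wᵀ * (P * (W * X))) = X := by
    intro κ _ X
    rw [show Wᵀ * (P * (W * X)) = (Wᵀ * P * W) * X by simp [Matrix.mul_assoc],
      ← hSu, ← Matrix.mul_assoc, hinv, Matrix.one_mul]
  -- the PSD matrix Q
  set Q : Matrix (Fin n ⊕ Fin m) (Fin n ⊕ Fin m) ℝ := P * (W * (Su⁻¹ * (Wᵀ * P))) with hQ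
  have hQsym : Qᵀ = Q := by
    simp only [hQ, transpose_mul, transpose_transpose, hPsym, hSuInvSym, Matrix.mul_assoc]
  have hQpsd : Q.PosSemidef := by
    have h := (hSuInvPD.posSemidef).conjTranspose_mul_mul_same (Wᵀ * P)
    simpa [conjTranspose_eq_transpose_of_trivial, transpose_mul, hPsym,
      Matrix.mul_assoc] using h
  have hPQ : (P - Q).PosSemidef := by
    have hT : (1 - W * (Su⁻¹ * (Wᵀ * P)))ᵀ * P * (1 - W * (Su⁻¹ * (Wᵀ * P))) = P - Q := by
      simp only [transpose_sub, transpose_one, transpose_mul, transpose_transpose,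
        hPsym, hSuInvSym, Matrix.sub_mul, Matrix.mul_sub, Matrix.one_mul, Matrix.mul_one,
        Matrix.mul_assoc, hcancel, hQ]
      abel
    rw [← hT]
    have h := hP.posSemidef.conjTranspose_mul_mul_same (1 - W * (Su⁻¹ * (Wᵀ * P)))
    rwa [conjTranspose_eq_transpose_of_trivial] at h
  -- scalar facts
  have hQnn : ∀ v : Fin n ⊕ Fin m → ℝ, 0 ≤ v ⬝ᵥ Q *ᵥ v := fun v => by
    simpa [star_trivial] using hQpsd.dotProduct_mulVec_nonneg v
  have hPQle : ∀ v : Fin n ⊕ Fin m → ℝ, v ⬝ᵥ Q *ᵥ v ≤ v ⬝ᵥ P *ᵥ v := fun v => by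
    have := hPQ.dotProduct_mulVec_nonneg v
    simp only [star_trivial, Matrix.sub_mulVec, dotProduct_sub] at this
    linarith
  -- key vectors
  set y : Fin n ⊕ Fin m → ℝ := (V * ΔA) *ᵥ x with hy
  set z : Fin n ⊕ Fin m → ℝ := V *ᵥ ΔC with hz
  have g1 := hQnn (x + y)
  have g2 := hQnn (x + z)
  have g3 := hPQle y
  have g4 := hPQle z
  simp only [Matrix.mulVec_add, dotProduct_add, add_dotProduct,
    dot_symm hQsym y x, dot_symm hQsym z x] at g1 g2
  -- expand the goal
  have hL : 2 * (x ⬝ᵥ P *ᵥ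
        ((V * Abar + W * Kbar + (V - W * Su⁻¹ * (Wᵀ * P * V)) * ΔA) *ᵥ x
          + Cbar + (V - W * Su⁻¹ * (Wᵀ * P * V)) *ᵥ ΔC))
      = 2 * (x ⬝ᵥ P *ᵥ ((V * Abar + W * Kbar) *ᵥ x)) + 2 * (x ⬝ᵥ P *ᵥ y)
        - 2 * (x ⬝ᵥ Q *ᵥ y) + 2 * (x ⬝ᵥ P *ᵥ Cbar) + 2 * (x ⬝ᵥ P *ᵥ z)
        - 2 * (x ⬝ᵥ Q *ᵥ z) := by
    simp only [hy, hz, hQ, Matrix.sub_mul, Matrix.add_mulVec, Matrix.sub_mulVec,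
      Matrix.mulVec_add, Matrix.mulVec_sub, dotProduct_add, dotProduct_sub,
      mulVec_mulVec, Matrix.mul_assoc]
    ring
  have hR : x ⬝ᵥ ((P * (V * Abar + W * Kbar) + (V * Abar + W * Kbar)ᵀ * P)
        + P * V * ΔA + (P * V * ΔA)ᵀ + ΔAᵀ * Vᵀ * P * V * ΔA
        + (2 : ℝ) • (P * W * (Wᵀ * P * W)⁻¹ * Wᵀ * P)) *ᵥ x
        + 2 * (x ⬝ᵥ P *ᵥ Cbar) + ΔC ⬝ᵥ (Vᵀ * P * V) *ᵥ ΔC + 2 * (x ⬝ᵥ (P * V) *ᵥ ΔC)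
      = 2 * (x ⬝ᵥ P *ᵥ ((V * Abar + W * Kbar) *ᵥ x)) + 2 * (x ⬝ᵥ P *ᵥ y)
        + (y ⬝ᵥ P *ᵥ y) + 2 * (x ⬝ᵥ Q *ᵥ x) + 2 * (x ⬝ᵥ P *ᵥ Cbar)
        + (z ⬝ᵥ P *ᵥ z) + 2 * (x ⬝ᵥ P *ᵥ z) := by
    have b1 : x ⬝ᵥ ((V * Abar + W * Kbar)ᵀ * P) *ᵥ x
        = x ⬝ᵥ P *ᵥ ((V * Abar) *ᵥ x + (W * Kbar) *ᵥ x) := by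
      rw [← Matrix.add_mulVec,
        show (V * Abar + W * Kbar)ᵀ * P = (P * (V * Abar + W * Kbar))ᵀ by
          simp [transpose_mul, hPsym],
        dot_transpose, ← mulVec_mulVec]
    have b2 : x ⬝ᵥ (P * (V * ΔA))ᵀ *ᵥ x = x ⬝ᵥ (P * (V * ΔA)) *ᵥ x :=
      dot_transpose _ _
    have b3 : x ⬝ᵥ (ΔAᵀ * (Vᵀ * (P * (V * ΔA)))) *ᵥ x
        = (V * ΔA) *ᵥ x ⬝ᵥ (P * (V * ΔA)) *ᵥ x := by
      rw [dot_shift, mulVec_mulVec]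
      simp [transpose_mul, Matrix.mul_assoc]
    have b4 : ΔC ⬝ᵥ (Vᵀ * (P * V)) *ᵥ ΔC = V *ᵥ ΔC ⬝ᵥ (P * V) *ᵥ ΔC := by
      rw [dot_shift, mulVec_mulVec]
    rw [← hSu]
    simp only [Matrix.add_mulVec, dotProduct_add, Matrix.smul_mulVec,
      dotProduct_smul, smul_eq_mul, hy, hz, mulVec_mulVec, Matrix.mul_assoc]
    rw [b1, b2, b3, b4]
    simp only [Matrix.mul_add, Matrix.add_mulVec, Matrix.mulVec_add, dotProduct_add,
      mulVec_mulVec]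
    ring
  rw [show ((R2 n m)ᵀ * P * R2 n m)⁻¹ = (Wᵀ * P * W)⁻¹ from rfl] at *
  calc 2 * (x ⬝ᵥ P *ᵥ
        ((V * Abar + W * Kbar + (V - W * Su⁻¹ * (Wᵀ * P * V)) * ΔA) *ᵥ x
          + Cbar + (V - W * Su⁻¹ * (Wᵀ * P * V)) *ᵥ ΔC))
      = 2 * (x ⬝ᵥ P *ᵥ ((V * Abar + W * Kbar) *ᵥ x)) + 2 * (x ⬝ᵥ P *ᵥ y)
        - 2 * (x ⬝ᵥ Q *ᵥ y) + 2 * (x ⬝ᵥ P *ᵥ Cbar) + 2 * (x ⬝ᵥ P *ᵥ z)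
        - 2 * (x ⬝ᵥ Q *ᵥ z) := hL
    _ ≤ 2 * (x ⬝ᵥ P *ᵥ ((V * Abar + W * Kbar) *ᵥ x)) + 2 * (x ⬝ᵥ P *ᵥ y)
        + (y ⬝ᵥ P *ᵥ y) + 2 * (x ⬝ᵥ Q *ᵥ x) + 2 * (x ⬝ᵥ P *ᵥ Cbar)
        + (z ⬝ᵥ P *ᵥ z) + 2 * (x ⬝ᵥ P *ᵥ z) := by linarith
    _ = _ := hR.symm
end

section
/- Let n, m be positive integers, ε_{f0} ≥ 0, and P a symmetric positive definite real (n+m)×(n+m) matrix. Let Ā₀ be a real n×(n+m) matrix, K̄₀ a real m×(n+m) matrix, and η₀ > 0. Set Λ₀ := P(R₁Ā₀ + R₂K̄₀) + (R₁Ā₀ + R₂K̄₀)ᵀP. Suppose the symmetric block matrix with diagonal block sizes (n+m, n, m) given by [[Λ₀ + η₀ε_{f0}²I_{n+m}, PR₁, PR₂], [⋆, R₁ᵀPR₁ − η₀Iₙ, 0], [⋆, ⋆, −R₂ᵀPR₂]] is negative definite (⋆ denoting entries determined by symmetry). Then for every x̄ ∈ ℝⁿ⁺ᵐ with x̄ ≠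 0 and every a ∈ ℝⁿ with ‖a‖ ≤ ε_{f0}‖x̄‖: x̄ᵀΛ₀x̄ + x̄ᵀ P R₂ (R₂ᵀPR₂)⁻¹ R₂ᵀ P x̄ + 2 x̄ᵀ P R₁ a + aᵀ R₁ᵀ P R₁ a < 0. -/
open Matrix

lemma mulVec_dot_aux {k l : Type*} [Fintype k] [Fintype l]
    (M : Matrix k l ℝ) (x : l → ℝ) (w : k → ℝ) :
    (M *ᵥ x) ⬝ᵥ w = x ⬝ᵥ (Mᵀ *ᵥ w) := by
  rw [Matrix.dotProduct_mulVec, Matrix.vecMul_transpose]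

lemma su_posdef (n m : ℕ) (P : Matrix (Fin n ⊕ Fin m) (Fin n ⊕ Fin m) ℝ) (hP : P.PosDef) :
    ((R2 n m)ᵀ * P * R2 n m).PosDef := by
  refine Matrix.PosDef.of_dotProduct_mulVec_pos ?_ ?_
  · have hPh : Pᵀ = P := hP.1
    simp [Matrix.IsHermitian, Matrix.conjTranspose_eq_transpose_of_trivial,
      Matrix.transpose_mul, Matrix.mul_assoc, hPh]
  · intro y hy
    have h1 : (R2 n m) *ᵥ y ≠ 0 := by
      intro h
      apply hy
      funext j
      have := congrFun h (Sum.inr j)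
      simpa [R2, Matrix.mulVec, dotProduct] using this
    have := hP.dotProduct_mulVec_pos h1
    simpa [Matrix.mulVec_mulVec, Matrix.mul_assoc, mulVec_dot_aux, star_trivial] using this

/-- LMI (25) of the origin region: negative definiteness of the
symmetric block matrix with diagonal block sizes `(n+m, n, m)`,
`[[Λ₀ + η₀ε_{f0}²I, PR₁, PR₂], [⋆, R₁ᵀPR₁ − η₀Iₙ, 0], [⋆, ⋆, −R₂ᵀPR₂]]`
(expressed here, as in the paper, via its quadratic form: `zᵀMz < 0` for all `z ≠ 0`),
implies, for every `x̄ ≠ 0` and every `a` with `‖a‖ ≤ ε_{f0}‖x̄‖`: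
`x̄ᵀΛ₀x̄ + x̄ᵀPR₂(R₂ᵀPR₂)⁻¹R₂ᵀPx̄ + 2x̄ᵀPR₁a + aᵀR₁ᵀPR₁a < 0`. -/
theorem lmi_25_implies_origin_region_bound
    (n m : ℕ) (hn : 0 < n) (hm : 0 < m)
    (εf0 : ℝ) (hεf0 : 0 ≤ εf0)
    (P : Matrix (Fin n ⊕ Fin m) (Fin n ⊕ Fin m) ℝ) (hP : P.PosDef)
    (Abar0 : Matrix (Fin n) (Fin n ⊕ Fin m) ℝ)
    (Kbar0 : Matrix (Fin m) (Fin n ⊕ Fin m) ℝ)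
    (η₀ : ℝ) (hη₀ : 0 < η₀)
    (Λ₀ : Matrix (Fin n ⊕ Fin m) (Fin n ⊕ Fin m) ℝ)
    (hΛ₀ : Λ₀ = P * (R1 n m * Abar0 + R2 n m * Kbar0)
      + (R1 n m * Abar0 + R2 n m * Kbar0)ᵀ * P)
    (hLMI : ∀ (z₀ : Fin n ⊕ Fin m → ℝ) (z₁ : Fin n → ℝ) (z₂ : Fin m → ℝ),
      ¬(z₀ = 0 ∧ z₁ = 0 ∧ z₂ = 0) →
      z₀ ⬝ᵥ (Λ₀ + (η₀ * εf0 ^ 2) • (1 : Matrix (Fin n ⊕ Fin m) (Fin n ⊕ Fin m) ℝ)).mulVec z₀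
        + 2 * (z₀ ⬝ᵥ (P * R1 n m).mulVec z₁)
        + 2 * (z₀ ⬝ᵥ (P * R2 n m).mulVec z₂)
        + z₁ ⬝ᵥ ((R1 n m)ᵀ * P * R1 n m - η₀ • (1 : Matrix (Fin n) (Fin n) ℝ)).mulVec z₁
        - z₂ ⬝ᵥ ((R2 n m)ᵀ * P * R2 n m).mulVec z₂ < 0) :
    ∀ (xbar : EuclideanSpace ℝ (Fin n ⊕ Fin m)) (a : EuclideanSpace ℝ (Fin n)),
      xbar ≠ 0 → ‖a‖ ≤ εf0 * ‖xbar‖ →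
      xbar ⬝ᵥ Λ₀.mulVec xbar
        + xbar ⬝ᵥ (P * R2 n m * ((R2 n m)ᵀ * P * R2 n m)⁻¹ * (R2 n m)ᵀ * P).mulVec xbar
        + 2 * (xbar ⬝ᵥ (P * R1 n m).mulVec a)
        + a ⬝ᵥ ((R1 n m)ᵀ * P * R1 n m).mulVec a < 0 := by
  intro xbar a hx hna
  set S : Matrix (Fin m) (Fin m) ℝ := (R2 n m)ᵀ * P * R2 n m with hSdef
  have hS : S.PosDef := su_posdef n m P hP
  have hSunit : IsUnit S.det := isUnit_iff_ne_zero.mpr hS.det_pos.ne'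
  have hSmul : S * S⁻¹ = 1 := Matrix.mul_nonsing_inv S hSunit
  have hSt : Sᵀ = S := by
    have := hS.1
    rwa [Matrix.IsHermitian, Matrix.conjTranspose_eq_transpose_of_trivial] at this
  have hSit : (S⁻¹)ᵀ = S⁻¹ := by rw [Matrix.transpose_nonsing_inv, hSt]
  have hPt : Pᵀ = P := by
    have := hP.1
    rwa [Matrix.IsHermitian, Matrix.conjTranspose_eq_transpose_of_trivial] at this
  set M : Matrix (Fin m) (Fin n ⊕ Fin m) ℝ := S⁻¹ * ((R2 n m)ᵀ * P) with hMdef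
  set w : Fin m → ℝ := M *ᵥ xbar with hwdef
  -- the Schur-complement matrix
  set Q : ℝ := xbar ⬝ᵥ (P * R2 n m * S⁻¹ * (R2 n m)ᵀ * P) *ᵥ xbar with hQdef
  have hne : ¬((xbar : Fin n ⊕ Fin m → ℝ) = 0 ∧ (a : Fin n → ℝ) = 0 ∧ w = 0) := by
    rintro ⟨h0, -, -⟩
    exact hx (by ext i; exact congrFun h0 i)
  have key := hLMI xbar a w hne
  -- identify terms
  have E1 : xbar ⬝ᵥ (P * R2 n m) *ᵥ w = Q := by
    rw [hwdef, Matrix.mulVec_mulVec, hQdef, hMdef]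
    congr 1
    simp [Matrix.mul_assoc]
  have hMmat : Mᵀ * (S * M) = P * R2 n m * S⁻¹ * (R2 n m)ᵀ * P := by
    have hMt : Mᵀ = P * R2 n m * S⁻¹ := by
      rw [hMdef, Matrix.transpose_mul, Matrix.transpose_mul, hSit, hPt]
      simp [Matrix.mul_assoc]
    rw [hMt, hMdef]
    calc P * R2 n m * S⁻¹ * (S * (S⁻¹ * ((R2 n m)ᵀ * P)))
        = P * R2 n m * (S⁻¹ * (S * S⁻¹)) * ((R2 n m)ᵀ * P) := by
          simp [Matrix.mul_assoc]
      _ = P * R2 n m * S⁻¹ * (R2 n m)ᵀ * P := by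
          rw [hSmul, Matrix.mul_one]
          simp [Matrix.mul_assoc]
  have E2 : w ⬝ᵥ S *ᵥ w = Q := by
    rw [hwdef, Matrix.mulVec_mulVec, mulVec_dot_aux, Matrix.mulVec_mulVec, hMmat, hQdef]
  rw [E1, E2] at key
  have E3 : xbar ⬝ᵥ (Λ₀ + (η₀ * εf0 ^ 2) • (1 : Matrix (Fin n ⊕ Fin m) (Fin n ⊕ Fin m) ℝ)) *ᵥ xbar
      = xbar ⬝ᵥ Λ₀ *ᵥ xbar + (η₀ * εf0 ^ 2) * (xbar ⬝ᵥ xbar) := by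
    rw [Matrix.add_mulVec, dotProduct_add]
    congr 1
    simp [Matrix.smul_mulVec, Matrix.one_mulVec, dotProduct_smul, smul_eq_mul]
  have E4 : a ⬝ᵥ ((R1 n m)ᵀ * P * R1 n m - η₀ • (1 : Matrix (Fin n) (Fin n) ℝ)) *ᵥ a
      = a ⬝ᵥ ((R1 n m)ᵀ * P * R1 n m) *ᵥ a - η₀ * (a ⬝ᵥ a) := by
    rw [Matrix.sub_mulVec, dotProduct_sub]
    congr 1
    simp [Matrix.smul_mulVec, Matrix.one_mulVec, dotProduct_smul, smul_eq_mul]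
  rw [E3, E4] at key
  -- norm bound
  have hxx : (xbar : Fin n ⊕ Fin m → ℝ) ⬝ᵥ xbar = ‖xbar‖ ^ 2 := by
    rw [EuclideanSpace.norm_eq, Real.sq_sqrt (by positivity)]
    simp [dotProduct, sq]
  have haa : (a : Fin n → ℝ) ⬝ᵥ a = ‖a‖ ^ 2 := by
    rw [EuclideanSpace.norm_eq, Real.sq_sqrt (by positivity)]
    simp [dotProduct, sq]
  have hbound : η₀ * ((a : Fin n → ℝ) ⬝ᵥ a) ≤ η₀ * εf0 ^ 2 * ((xbar : Fin n ⊕ Fin m → ℝ) ⬝ᵥ xbar) := by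
    rw [haa, hxx]
    have h2 : ‖a‖ ^ 2 ≤ (εf0 * ‖xbar‖) ^ 2 := by
      apply pow_le_pow_left₀ (norm_nonneg a) hna
    nlinarith [hη₀.le, h2]
  -- conclude
  have hgoal : xbar ⬝ᵥ Λ₀ *ᵥ xbar + Q + 2 * (xbar ⬝ᵥ (P * R1 n m) *ᵥ a)
      + a ⬝ᵥ ((R1 n m)ᵀ * P * R1 n m) *ᵥ a < 0 := by linarith
  calc xbar ⬝ᵥ Λ₀ *ᵥ xbar
        + xbar ⬝ᵥ (P * R2 n m * ((R2 n m)ᵀ * P * R2 n m)⁻¹ * (R2 n m)ᵀ * P) *ᵥ xbar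
        + 2 * (xbar ⬝ᵥ (P * R1 n m) *ᵥ a)
        + a ⬝ᵥ ((R1 n m)ᵀ * P * R1 n m) *ᵥ a
      = xbar ⬝ᵥ Λ₀ *ᵥ xbar + Q + 2 * (xbar ⬝ᵥ (P * R1 n m) *ᵥ a)
        + a ⬝ᵥ ((R1 n m)ᵀ * P * R1 n m) *ᵥ a := by rw [hQdef]
    _ < 0 := hgoal
end
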